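/- Let a, b, c, w, z, f : ℝ² → ℝ be C¹ functions and let θ, φ : ℝ² → ℝ be C² functions that are nowhere zero. Suppose there exist C¹ functions α, β, γ, δ : ℝ² → ℝ such that for every C² function X : ℝ² → ℝ and every point of ℝ²: φ·ℒ(θX) = α X_xx + β X_yy + (γ+δ) X_xy + (α_x + δ_y) X_x + (β_y + γ_x) X_y, where ℒψ := aψ_xx + bψ_yy + 2cψ_xy + (a_x+c_y+w)ψ_x + (b_y+c_x+z)ψ_y − fψ. Then ℒθ = 0 and ℒ†φ = 0 on all of ℝ², where ℒ†φ := (aφ_x + cφ_y − wφ)_x + (bφ_y + cφ_x − zφ)_y − fφ. -/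

import Mathlib

/-- Partial derivative with respect to the first variable. -/
noncomputable def px (f : ℝ × ℝ → ℝ) : ℝ × ℝ → ℝ :=
  fun p => fderiv ℝ f p (1, 0)

/-- Partial derivative with respect to the second variable. -/
noncomputable def py (f : ℝ × ℝ → ℝ) : ℝ × ℝ → ℝ :=
  fun p => fderiv ℝ f p (0, 1)

/-- The general second-order operator
`ℒψ = aψ_xx + bψ_yy + 2cψ_xy + (a_x+c_y+w)ψ_x + (b_y+c_x+z)ψ_y − fψ`. -/
noncomputable def Lop (a b c w z f ψ : ℝ × ℝ → ℝ) : ℝ × ℝ → ℝ :=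
  fun p =>
    a p * px (px ψ) p + b p * py (py ψ) p + 2 * c p * px (py ψ) p
      + (px a p + py c p + w p) * px ψ p
      + (py b p + px c p + z p) * py ψ p - f p * ψ p

/-- The formal adjoint `ℒ†φ = (aφ_x + cφ_y − wφ)_x + (bφ_y + cφ_x − zφ)_y − fφ`. -/
noncomputable def Ladj (a b c w z f φ : ℝ × ℝ → ℝ) : ℝ × ℝ → ℝ :=
  fun p =>
    px (fun q => a q * px φ q + c q * py φ q - w q * φ q) p
      + py (fun q => b q * py φ q + c q * px φ q - z q * φ q) p - f p * φ p

/-! ### Auxiliary lemmas -/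

lemma px_mul {f g : ℝ × ℝ → ℝ} {p : ℝ × ℝ} (hf : DifferentiableAt ℝ f p)
    (hg : DifferentiableAt ℝ g p) :
    px (fun q => f q * g q) p = px f p * g p + f p * px g p := by
  simp only [px, fderiv_fun_mul hf hg, ContinuousLinearMap.add_apply,
    ContinuousLinearMap.smul_apply, smul_eq_mul]
  ring

lemma py_mul {f g : ℝ × ℝ → ℝ} {p : ℝ × ℝ} (hf : DifferentiableAt ℝ f p)
    (hg : DifferentiableAt ℝ g p) :
    py (fun q => f q * g q) p = py f p * g p + f p * py g p := by
  simp only [py, fderiv_fun_mul hf hg, ContinuousLinearMap.add_apply,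
    ContinuousLinearMap.smul_apply, smul_eq_mul]
  ring

lemma px_add {f g : ℝ × ℝ → ℝ} {p : ℝ × ℝ} (hf : DifferentiableAt ℝ f p)
    (hg : DifferentiableAt ℝ g p) :
    px (fun q => f q + g q) p = px f p + px g p := by
  simp [px, fderiv_fun_add hf hg]

lemma py_add {f g : ℝ × ℝ → ℝ} {p : ℝ × ℝ} (hf : DifferentiableAt ℝ f p)
    (hg : DifferentiableAt ℝ g p) :
    py (fun q => f q + g q) p = py f p + py g p := by
  simp [py, fderiv_fun_add hf hg]

lemma px_sub {f g : ℝ × ℝ → ℝ} {p : ℝ × ℝ} (hf : DifferentiableAt ℝ f p)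
    (hg : DifferentiableAt ℝ g p) :
    px (fun q => f q - g q) p = px f p - px g p := by
  simp [px, fderiv_fun_sub hf hg]

lemma py_sub {f g : ℝ × ℝ → ℝ} {p : ℝ × ℝ} (hf : DifferentiableAt ℝ f p)
    (hg : DifferentiableAt ℝ g p) :
    py (fun q => f q - g q) p = py f p - py g p := by
  simp [py, fderiv_fun_sub hf hg]

lemma px_neg {g : ℝ × ℝ → ℝ} {p : ℝ × ℝ} :
    px (fun q => -(g q)) p = -(px g p) := by
  simp [px, fderiv_neg]

lemma py_neg {g : ℝ × ℝ → ℝ} {p : ℝ × ℝ} :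
    py (fun q => -(g q)) p = -(py g p) := by
  simp [py, fderiv_neg]

lemma px_const (r : ℝ) : px (fun _ : ℝ × ℝ => r) = fun _ => 0 := by
  funext p; simp [px]

lemma py_const (r : ℝ) : py (fun _ : ℝ × ℝ => r) = fun _ => 0 := by
  funext p; simp [py]

lemma px_fst : px (fun p : ℝ × ℝ => p.1) = fun _ => 1 := by
  funext p
  show fderiv ℝ Prod.fst p (1, 0) = 1
  rw [fderiv_fst]; rfl

lemma py_fst : py (fun p : ℝ × ℝ => p.1) = fun _ => 0 := by
  funext p
  show fderiv ℝ Prod.fst p (0, 1) = 0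
  rw [fderiv_fst]; rfl

lemma px_snd : px (fun p : ℝ × ℝ => p.2) = fun _ => 0 := by
  funext p
  show fderiv ℝ Prod.snd p (1, 0) = 0
  rw [fderiv_snd]; rfl

lemma py_snd : py (fun p : ℝ × ℝ => p.2) = fun _ => 1 := by
  funext p
  show fderiv ℝ Prod.snd p (0, 1) = 1
  rw [fderiv_snd]; rfl

lemma contDiff_px {f : ℝ × ℝ → ℝ} (hf : ContDiff ℝ 2 f) : ContDiff ℝ 1 (px f) :=
  (hf.fderiv_right (m := 1) (by norm_num)).clm_apply contDiff_const

lemma contDiff_py {f : ℝ × ℝ → ℝ} (hf : ContDiff ℝ 2 f) : ContDiff ℝ 1 (py f) :=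
  (hf.fderiv_right (m := 1) (by norm_num)).clm_apply contDiff_const

lemma px_mul3 {f g k : ℝ × ℝ → ℝ} {p : ℝ × ℝ} (hf : DifferentiableAt ℝ f p)
    (hg : DifferentiableAt ℝ g p) (hk : DifferentiableAt ℝ k p) :
    px (fun q => f q * (g q * k q)) p
      = px f p * (g p * k p) + f p * (px g p * k p + g p * px k p) := by
  rw [px_mul hf (hg.fun_mul hk), px_mul hg hk]

lemma py_mul3 {f g k : ℝ × ℝ → ℝ} {p : ℝ × ℝ} (hf : DifferentiableAt ℝ f p)
    (hg : DifferentiableAt ℝ g p) (hk : DifferentiableAt ℝ k p) :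
    py (fun q => f q * (g q * k q)) p
      = py f p * (g p * k p) + f p * (py g p * k p + g p * py k p) := by
  rw [py_mul hf (hg.fun_mul hk), py_mul hg hk]

lemma px5 {A B C D E : ℝ × ℝ → ℝ} {p : ℝ × ℝ}
    (hA : DifferentiableAt ℝ A p) (hB : DifferentiableAt ℝ B p)
    (hC : DifferentiableAt ℝ C p) (hD : DifferentiableAt ℝ D p)
    (hE : DifferentiableAt ℝ E p) :
    px (fun q => A q + B q - C q - D q + E q) p
      = px A p + px B p - px C p - px D p + px E p := by
  have h1 : px (fun q => A q + B q - C q - D q + E q) p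
      = px (fun q => A q + B q - C q - D q) p + px E p :=
    px_add (((hA.add hB).sub hC).sub hD) hE
  have h2 : px (fun q => A q + B q - C q - D q) p
      = px (fun q => A q + B q - C q) p - px D p :=
    px_sub ((hA.add hB).sub hC) hD
  have h3 : px (fun q => A q + B q - C q) p
      = px (fun q => A q + B q) p - px C p :=
    px_sub (hA.add hB) hC
  have h4 : px (fun q => A q + B q) p = px A p + px B p := px_add hA hB
  rw [h1, h2, h3, h4]

lemma py5 {A B C D E : ℝ × ℝ → ℝ} {p : ℝ × ℝ}
    (hA : DifferentiableAt ℝ A p) (hB : DifferentiableAt ℝ B p)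
    (hC : DifferentiableAt ℝ C p) (hD : DifferentiableAt ℝ D p)
    (hE : DifferentiableAt ℝ E p) :
    py (fun q => A q + B q - C q - D q + E q) p
      = py A p + py B p - py C p - py D p + py E p := by
  have h1 : py (fun q => A q + B q - C q - D q + E q) p
      = py (fun q => A q + B q - C q - D q) p + py E p :=
    py_add (((hA.add hB).sub hC).sub hD) hE
  have h2 : py (fun q => A q + B q - C q - D q) p
      = py (fun q => A q + B q - C q) p - py D p :=
    py_sub ((hA.add hB).sub hC) hD
  have h3 : py (fun q => A q + B q - C q) p
      = py (fun q => A q + B q) p - py C p :=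
    py_sub (hA.add hB) hC
  have h4 : py (fun q => A q + B q) p = py A p + py B p := py_add hA hB
  rw [h1, h2, h3, h4]

lemma px3 {A B C : ℝ × ℝ → ℝ} {p : ℝ × ℝ}
    (hA : DifferentiableAt ℝ A p) (hB : DifferentiableAt ℝ B p)
    (hC : DifferentiableAt ℝ C p) :
    px (fun q => A q + B q - C q) p = px A p + px B p - px C p := by
  have h3 : px (fun q => A q + B q - C q) p
      = px (fun q => A q + B q) p - px C p :=
    px_sub (hA.add hB) hC
  have h4 : px (fun q => A q + B q) p = px A p + px B p := px_add hA hB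
  rw [h3, h4]

lemma py3 {A B C : ℝ × ℝ → ℝ} {p : ℝ × ℝ}
    (hA : DifferentiableAt ℝ A p) (hB : DifferentiableAt ℝ B p)
    (hC : DifferentiableAt ℝ C p) :
    py (fun q => A q + B q - C q) p = py A p + py B p - py C p := by
  have h3 : py (fun q => A q + B q - C q) p
      = py (fun q => A q + B q) p - py C p :=
    py_sub (hA.add hB) hC
  have h4 : py (fun q => A q + B q) p = py A p + py B p := py_add hA hB
  rw [h3, h4]

/-- Clairaut's theorem for `C²` functions in terms of `px`/`py`. -/
lemma mixed_symm {u : ℝ × ℝ → ℝ} (hu : ContDiff ℝ 2 u) (p : ℝ × ℝ) :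
    px (py u) p = py (px u) p := by
  have hsym : IsSymmSndFDerivAt ℝ u p := hu.contDiffAt.isSymmSndFDerivAt (by simp)
  have hdf : DifferentiableAt ℝ (fderiv ℝ u) p := by
    have h1 : ContDiff ℝ 1 (fderiv ℝ u) := hu.fderiv_right (m := 1) (by norm_num)
    exact (h1.differentiable (by norm_num)) p
  have hx : px (py u) p = fderiv ℝ (fderiv ℝ u) p (1, 0) (0, 1) := by
    show fderiv ℝ (fun q => (fderiv ℝ u q) ((0:ℝ), (1:ℝ))) p (1, 0) = _
    rw [fderiv_clm_apply hdf (differentiableAt_const _)]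
    simp
  have hy : py (px u) p = fderiv ℝ (fderiv ℝ u) p (0, 1) (1, 0) := by
    show fderiv ℝ (fun q => (fderiv ℝ u q) ((1:ℝ), (0:ℝ))) p (0, 1) = _
    rw [fderiv_clm_apply hdf (differentiableAt_const _)]
    simp
  rw [hx, hy, hsym]

/-- A `C¹` function whose partial derivatives are `C¹` is `C²`. -/
lemma contDiff_two_of_partials {u M N : ℝ × ℝ → ℝ} (hu : ContDiff ℝ 1 u)
    (hN : ContDiff ℝ 1 N) (hM : ContDiff ℝ 1 M)
    (hx : px u = N) (hy : py u = M) : ContDiff ℝ 2 u := by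
  have h2 : (2 : WithTop ℕ∞) = 1 + 1 := by norm_num
  rw [h2, contDiff_succ_iff_fderiv_apply]
  refine ⟨hu.differentiable (by norm_num), by simp, fun y => ?_⟩
  have key : (fun x => fderiv ℝ u x y) = fun x => y.1 * N x + y.2 * M x := by
    funext x
    have hyy : y = y.1 • ((1:ℝ), (0:ℝ)) + y.2 • ((0:ℝ), (1:ℝ)) := by
      simp [Prod.ext_iff]
    conv_lhs => rw [hyy]
    rw [map_add, map_smul, map_smul]
    have e1 : fderiv ℝ u x (1, 0) = N x := by rw [← hx]; rfl
    have e2 : fderiv ℝ u x (0, 1) = M x := by rw [← hy]; rfl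
    rw [e1, e2]; simp
  rw [key]
  exact (contDiff_const.mul hN).add (contDiff_const.mul hM)

/-- Leibniz expansion of `ℒ(θ·X)`. -/
lemma Lop_mul (a b c w z f θ X : ℝ × ℝ → ℝ) (hθ : ContDiff ℝ 2 θ) (hX : ContDiff ℝ 2 X)
    (p : ℝ × ℝ) :
    Lop a b c w z f (fun q => θ q * X q) p =
      Lop a b c w z f θ p * X p
      + (2 * a p * px θ p + 2 * c p * py θ p + (px a p + py c p + w p) * θ p) * px X p
      + (2 * b p * py θ p + 2 * c p * px θ p + (py b p + px c p + z p) * θ p) * py X p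
      + a p * (θ p * px (px X) p) + b p * (θ p * py (py X) p)
      + 2 * c p * (θ p * px (py X) p) := by
  have hθd := hθ.differentiable (by norm_num)
  have hXd := hX.differentiable (by norm_num)
  have hpxθ := (contDiff_px hθ).differentiable (by norm_num)
  have hpyθ := (contDiff_py hθ).differentiable (by norm_num)
  have hpxX := (contDiff_px hX).differentiable (by norm_num)
  have hpyX := (contDiff_py hX).differentiable (by norm_num)
  have e1 : px (fun q => θ q * X q) = fun q => px θ q * X q + θ q * px X q :=
    funext fun q => px_mul (hθd q) (hXd q)
  have e2 : py (fun q => θ q * X q) = fun q => py θ q * X q + θ q * py X q :=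
    funext fun q => py_mul (hθd q) (hXd q)
  have e3 : px (px (fun q => θ q * X q)) p
      = px (px θ) p * X p + px θ p * px X p + (px θ p * px X p + θ p * px (px X) p) := by
    rw [e1, px_add ((hpxθ p).fun_mul (hXd p)) ((hθd p).fun_mul (hpxX p)),
      px_mul (hpxθ p) (hXd p), px_mul (hθd p) (hpxX p)]
  have e4 : py (py (fun q => θ q * X q)) p
      = py (py θ) p * X p + py θ p * py X p + (py θ p * py X p + θ p * py (py X) p) := by
    rw [e2, py_add ((hpyθ p).fun_mul (hXd p)) ((hθd p).fun_mul (hpyX p)),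
      py_mul (hpyθ p) (hXd p), py_mul (hθd p) (hpyX p)]
  have e5 : px (py (fun q => θ q * X q)) p
      = px (py θ) p * X p + py θ p * px X p + (px θ p * py X p + θ p * px (py X) p) := by
    rw [e2, px_add ((hpyθ p).fun_mul (hXd p)) ((hθd p).fun_mul (hpyX p)),
      px_mul (hpyθ p) (hXd p), px_mul (hθd p) (hpyX p)]
  have e1p := px_mul (hθd p) (hXd p)
  have e2p := py_mul (hθd p) (hXd p)
  simp only [Lop]
  rw [e3, e4, e5, e1p, e2p]
  ring

/-- The Lagrange-type identity:  `M_x + N_y = φ·ℒθ − θ·ℒ†φ`. -/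
lemma key_identity (a b c w z f θ φ : ℝ × ℝ → ℝ)
    (ha : ContDiff ℝ 1 a) (hb : ContDiff ℝ 1 b) (hc : ContDiff ℝ 1 c)
    (hw : ContDiff ℝ 1 w) (hz : ContDiff ℝ 1 z)
    (hθ : ContDiff ℝ 2 θ) (hφ : ContDiff ℝ 2 φ) (p : ℝ × ℝ) :
    px (fun q => φ q * (a q * px θ q) + φ q * (c q * py θ q)
        - θ q * (a q * px φ q) - θ q * (c q * py φ q) + θ q * (w q * φ q)) p
      + py (fun q => φ q * (b q * py θ q) + φ q * (c q * px θ q)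
        - θ q * (b q * py φ q) - θ q * (c q * px φ q) + θ q * (z q * φ q)) p
      = φ p * Lop a b c w z f θ p - θ p * Ladj a b c w z f φ p := by
  have had : Differentiable ℝ a := ha.differentiable (by norm_num)
  have hbd : Differentiable ℝ b := hb.differentiable (by norm_num)
  have hcd : Differentiable ℝ c := hc.differentiable (by norm_num)
  have hwd : Differentiable ℝ w := hw.differentiable (by norm_num)
  have hzd : Differentiable ℝ z := hz.differentiable (by norm_num)
  have hθd : Differentiable ℝ θ := hθ.differentiable (by norm_num)
  have hφd : Differentiable ℝ φ := hφ.differentiable (by norm_num)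
  have hpxθ : Differentiable ℝ (px θ) := (contDiff_px hθ).differentiable (by norm_num)
  have hpyθ : Differentiable ℝ (py θ) := (contDiff_py hθ).differentiable (by norm_num)
  have hpxφ : Differentiable ℝ (px φ) := (contDiff_px hφ).differentiable (by norm_num)
  have hpyφ : Differentiable ℝ (py φ) := (contDiff_py hφ).differentiable (by norm_num)
  have hM : px (fun q => φ q * (a q * px θ q) + φ q * (c q * py θ q)
        - θ q * (a q * px φ q) - θ q * (c q * py φ q) + θ q * (w q * φ q)) p
      = (px φ p * (a p * px θ p) + φ p * (px a p * px θ p + a p * px (px θ) p))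
        + (px φ p * (c p * py θ p) + φ p * (px c p * py θ p + c p * px (py θ) p))
        - (px θ p * (a p * px φ p) + θ p * (px a p * px φ p + a p * px (px φ) p))
        - (px θ p * (c p * py φ p) + θ p * (px c p * py φ p + c p * px (py φ) p))
        + (px θ p * (w p * φ p) + θ p * (px w p * φ p + w p * px φ p)) := by
    rw [px5 ((hφd p).fun_mul ((had p).fun_mul (hpxθ p))) ((hφd p).fun_mul ((hcd p).fun_mul (hpyθ p)))
        ((hθd p).fun_mul ((had p).fun_mul (hpxφ p))) ((hθd p).fun_mul ((hcd p).fun_mul (hpyφ p)))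
        ((hθd p).fun_mul ((hwd p).fun_mul (hφd p))),
      px_mul3 (hφd p) (had p) (hpxθ p), px_mul3 (hφd p) (hcd p) (hpyθ p),
      px_mul3 (hθd p) (had p) (hpxφ p), px_mul3 (hθd p) (hcd p) (hpyφ p),
      px_mul3 (hθd p) (hwd p) (hφd p)]
  have hN : py (fun q => φ q * (b q * py θ q) + φ q * (c q * px θ q)
        - θ q * (b q * py φ q) - θ q * (c q * px φ q) + θ q * (z q * φ q)) p
      = (py φ p * (b p * py θ p) + φ p * (py b p * py θ p + b p * py (py θ) p))
        + (py φ p * (c p * px θ p) + φ p * (py c p * px θ p + c p * py (px θ) p))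
        - (py θ p * (b p * py φ p) + θ p * (py b p * py φ p + b p * py (py φ) p))
        - (py θ p * (c p * px φ p) + θ p * (py c p * px φ p + c p * py (px φ) p))
        + (py θ p * (z p * φ p) + θ p * (py z p * φ p + z p * py φ p)) := by
    rw [py5 ((hφd p).fun_mul ((hbd p).fun_mul (hpyθ p))) ((hφd p).fun_mul ((hcd p).fun_mul (hpxθ p)))
        ((hθd p).fun_mul ((hbd p).fun_mul (hpyφ p))) ((hθd p).fun_mul ((hcd p).fun_mul (hpxφ p)))
        ((hθd p).fun_mul ((hzd p).fun_mul (hφd p))),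
      py_mul3 (hφd p) (hbd p) (hpyθ p), py_mul3 (hφd p) (hcd p) (hpxθ p),
      py_mul3 (hθd p) (hbd p) (hpyφ p), py_mul3 (hθd p) (hcd p) (hpxφ p),
      py_mul3 (hθd p) (hzd p) (hφd p)]
  have hL1 : px (fun q => a q * px φ q + c q * py φ q - w q * φ q) p
      = (px a p * px φ p + a p * px (px φ) p) + (px c p * py φ p + c p * px (py φ) p)
        - (px w p * φ p + w p * px φ p) := by
    rw [px3 ((had p).fun_mul (hpxφ p)) ((hcd p).fun_mul (hpyφ p)) ((hwd p).fun_mul (hφd p)),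
      px_mul (had p) (hpxφ p), px_mul (hcd p) (hpyφ p), px_mul (hwd p) (hφd p)]
  have hL2 : py (fun q => b q * py φ q + c q * px φ q - z q * φ q) p
      = (py b p * py φ p + b p * py (py φ) p) + (py c p * px φ p + c p * py (px φ) p)
        - (py z p * φ p + z p * py φ p) := by
    rw [py3 ((hbd p).fun_mul (hpyφ p)) ((hcd p).fun_mul (hpxφ p)) ((hzd p).fun_mul (hφd p)),
      py_mul (hbd p) (hpyφ p), py_mul (hcd p) (hpxφ p), py_mul (hzd p) (hφd p)]
  have hsθ : py (px θ) p = px (py θ) p := (mixed_symm hθ p).symm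
  have hsφ : py (px φ) p = px (py φ) p := (mixed_symm hφ p).symm
  rw [hM, hN, hsθ, hsφ]
  simp only [Lop, Ladj, hL1, hL2, hsθ, hsφ]
  ring

/-- if the gauge transformation with `θ`, `φ` brings `ℒ` to
elementary transformable form then `ℒθ = 0` and `ℒ†φ = 0`. -/
theorem elementary_transformable_necessary_continuous
    (a b c w z f θ φ : ℝ × ℝ → ℝ)
    (ha : ContDiff ℝ 1 a) (hb : ContDiff ℝ 1 b) (hc : ContDiff ℝ 1 c)
    (hw : ContDiff ℝ 1 w) (hz : ContDiff ℝ 1 z) (hf : ContDiff ℝ 1 f)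
    (hθ : ContDiff ℝ 2 θ) (hφ : ContDiff ℝ 2 φ)
    (hθ0 : ∀ p : ℝ × ℝ, θ p ≠ 0) (hφ0 : ∀ p : ℝ × ℝ, φ p ≠ 0)
    (h : ∃ α β γ δ : ℝ × ℝ → ℝ,
      ContDiff ℝ 1 α ∧ ContDiff ℝ 1 β ∧ ContDiff ℝ 1 γ ∧ ContDiff ℝ 1 δ ∧
      ∀ X : ℝ × ℝ → ℝ, ContDiff ℝ 2 X → ∀ p : ℝ × ℝ,
        φ p * Lop a b c w z f (fun q => θ q * X q) p =
          α p * px (px X) p + β p * py (py X) p + (γ p + δ p) * px (py X) p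
            + (px α p + py δ p) * px X p + (py β p + px γ p) * py X p) :
    (∀ p : ℝ × ℝ, Lop a b c w z f θ p = 0) ∧
    (∀ p : ℝ × ℝ, Ladj a b c w z f φ p = 0) := by
  obtain ⟨α, β, γ, δ, hα1, hβ1, hγ1, hδ1, hmain⟩ := h
  have had : Differentiable ℝ a := ha.differentiable (by norm_num)
  have hbd : Differentiable ℝ b := hb.differentiable (by norm_num)
  have hcd : Differentiable ℝ c := hc.differentiable (by norm_num)
  have hwd : Differentiable ℝ w := hw.differentiable (by norm_num)
  have hzd : Differentiable ℝ z := hz.differentiable (by norm_num)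
  have hθd : Differentiable ℝ θ := hθ.differentiable (by norm_num)
  have hφd : Differentiable ℝ φ := hφ.differentiable (by norm_num)
  have hpxθ : Differentiable ℝ (px θ) := (contDiff_px hθ).differentiable (by norm_num)
  have hpyθ : Differentiable ℝ (py θ) := (contDiff_py hθ).differentiable (by norm_num)
  have hαd : Differentiable ℝ α := hα1.differentiable (by norm_num)
  have hβd : Differentiable ℝ β := hβ1.differentiable (by norm_num)
  have hγd : Differentiable ℝ γ := hγ1.differentiable (by norm_num)
  have hδd : Differentiable ℝ δ := hδ1.differentiable (by norm_num)
  -- derivatives of test functions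
  have dXx : ContDiff ℝ 2 (fun p : ℝ × ℝ => p.1) := contDiff_fst
  have dXy : ContDiff ℝ 2 (fun p : ℝ × ℝ => p.2) := contDiff_snd
  have dXxx : ContDiff ℝ 2 (fun p : ℝ × ℝ => p.1 * p.1) := contDiff_fst.mul contDiff_fst
  have dXyy : ContDiff ℝ 2 (fun p : ℝ × ℝ => p.2 * p.2) := contDiff_snd.mul contDiff_snd
  have dXxy : ContDiff ℝ 2 (fun p : ℝ × ℝ => p.1 * p.2) := contDiff_fst.mul contDiff_snd
  have pxsq : px (fun p : ℝ × ℝ => p.1 * p.1) = fun p => p.1 + p.1 := by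
    funext q
    rw [px_mul differentiableAt_fst differentiableAt_fst]
    simp only [px_fst]
    ring
  have pysq : py (fun p : ℝ × ℝ => p.1 * p.1) = fun _ => 0 := by
    funext q
    rw [py_mul differentiableAt_fst differentiableAt_fst]
    simp only [py_fst]
    ring
  have pxsq2 : px (fun p : ℝ × ℝ => p.2 * p.2) = fun _ => 0 := by
    funext q
    rw [px_mul differentiableAt_snd differentiableAt_snd]
    simp only [px_snd]
    ring
  have pysq2 : py (fun p : ℝ × ℝ => p.2 * p.2) = fun p => p.2 + p.2 := by
    funext q
    rw [py_mul differentiableAt_snd differentiableAt_snd]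
    simp only [py_snd]
    ring
  have pxxy : px (fun p : ℝ × ℝ => p.1 * p.2) = fun p => p.2 := by
    funext q
    rw [px_mul differentiableAt_fst differentiableAt_snd]
    simp only [px_fst, px_snd]
    ring
  have pyxy : py (fun p : ℝ × ℝ => p.1 * p.2) = fun p => p.1 := by
    funext q
    rw [py_mul differentiableAt_fst differentiableAt_snd]
    simp only [py_fst, py_snd]
    ring
  have pxplus : px (fun p : ℝ × ℝ => p.1 + p.1) = fun _ => (2:ℝ) := by
    funext q
    rw [px_add differentiableAt_fst differentiableAt_fst]
    simp only [px_fst]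
    norm_num
  have pyplus2 : py (fun p : ℝ × ℝ => p.2 + p.2) = fun _ => (2:ℝ) := by
    funext q
    rw [py_add differentiableAt_snd differentiableAt_snd]
    simp only [py_snd]
    norm_num
  have pxplus2 : px (fun p : ℝ × ℝ => p.2 + p.2) = fun _ => (0:ℝ) := by
    funext q
    rw [px_add differentiableAt_snd differentiableAt_snd]
    simp only [px_snd]
    norm_num
  have pyplus : py (fun p : ℝ × ℝ => p.1 + p.1) = fun _ => (0:ℝ) := by
    funext q
    rw [py_add differentiableAt_fst differentiableAt_fst]
    simp only [py_fst]
    norm_num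
  -- Step 1 : ℒθ = 0, from the test function X = 1
  have hLθ : ∀ p : ℝ × ℝ, Lop a b c w z f θ p = 0 := by
    intro p
    have E := hmain (fun _ => (1:ℝ)) contDiff_const p
    simp only [mul_one, px_const, py_const] at E
    simp only [px_const, py_const, mul_zero, zero_mul, add_zero, zero_add] at E
    exact (mul_eq_zero.mp E).resolve_left (hφ0 p)
  -- Step 2 : the five coefficient identities
  have E2 : ∀ p : ℝ × ℝ,
      φ p * (2 * a p * px θ p + 2 * c p * py θ p + (px a p + py c p + w p) * θ p)
        = px α p + py δ p := by
    intro p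
    have E := hmain (fun q : ℝ × ℝ => q.1) dXx p
    rw [Lop_mul a b c w z f θ (fun q : ℝ × ℝ => q.1) hθ dXx p] at E
    simp only [px_fst, py_fst, px_const, py_const, hLθ p] at E
    linarith [E]
  have E3 : ∀ p : ℝ × ℝ,
      φ p * (2 * b p * py θ p + 2 * c p * px θ p + (py b p + px c p + z p) * θ p)
        = py β p + px γ p := by
    intro p
    have E := hmain (fun q : ℝ × ℝ => q.2) dXy p
    rw [Lop_mul a b c w z f θ (fun q : ℝ × ℝ => q.2) hθ dXy p] at E
    simp only [px_snd, py_snd, px_const, py_const, hLθ p] at E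
    linarith [E]
  have hαf : α = fun p => φ p * (a p * θ p) := by
    funext p
    have E := hmain (fun q : ℝ × ℝ => q.1 * q.1) dXxx p
    rw [Lop_mul a b c w z f θ (fun q : ℝ × ℝ => q.1 * q.1) hθ dXxx p] at E
    simp only [pxsq, pysq, pxplus, pyplus, px_const, py_const, hLθ p] at E
    have e2 := E2 p
    linear_combination ((p.1 + p.1) * e2 - E) / 2
  have hβf : β = fun p => φ p * (b p * θ p) := by
    funext p
    have E := hmain (fun q : ℝ × ℝ => q.2 * q.2) dXyy p
    rw [Lop_mul a b c w z f θ (fun q : ℝ × ℝ => q.2 * q.2) hθ dXyy p] at E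
    simp only [pxsq2, pysq2, pyplus2, pxplus2, px_const, py_const, hLθ p] at E
    have e3 := E3 p
    linear_combination ((p.2 + p.2) * e3 - E) / 2
  have hγδ : ∀ p : ℝ × ℝ, γ p + δ p = 2 * (φ p * (θ p * c p)) := by
    intro p
    have E := hmain (fun q : ℝ × ℝ => q.1 * q.2) dXxy p
    rw [Lop_mul a b c w z f θ (fun q : ℝ × ℝ => q.1 * q.2) hθ dXxy p] at E
    simp only [pxxy, pyxy, px_fst, py_snd, px_const, py_const, px_snd, py_fst, hLθ p] at E
    have e2 := E2 p
    have e3 := E3 p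
    linear_combination p.2 * e2 + p.1 * e3 - E
  -- Step 3 : the function u = δ − φθc and its partial derivatives
  set u : ℝ × ℝ → ℝ := fun p => δ p - φ p * (θ p * c p) with hu_def
  have hptc : ∀ p : ℝ × ℝ, DifferentiableAt ℝ (fun q => φ q * (θ q * c q)) p :=
    fun p => (hφd p).mul ((hθd p).mul (hcd p))
  have hu1 : ContDiff ℝ 1 u :=
    hδ1.sub ((hφ.of_le one_le_two).mul ((hθ.of_le one_le_two).mul hc))
  have hγf : γ = fun p => 2 * (φ p * (θ p * c p)) - δ p := by
    funext p
    have := hγδ p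
    linarith
  have hpxu : px u = fun q => -(φ q * (b q * py θ q) + φ q * (c q * px θ q)
      - θ q * (b q * py φ q) - θ q * (c q * px φ q) + θ q * (z q * φ q)) := by
    funext p
    have t3 : px u p = px δ p - (px φ p * (θ p * c p)
        + φ p * (px θ p * c p + θ p * px c p)) := by
      rw [hu_def]
      rw [px_sub (hδd p) (hptc p), px_mul3 (hφd p) (hθd p) (hcd p)]
    have t1 : px γ p = 2 * (px φ p * (θ p * c p) + φ p * (px θ p * c p + θ p * px c p))
        - px δ p := by
      rw [hγf]
      have h2 : px (fun q => 2 * (φ q * (θ q * c q)) - δ q) p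
          = px (fun q => 2 * (φ q * (θ q * c q))) p - px δ p :=
        px_sub ((differentiableAt_const 2).mul (hptc p)) (hδd p)
      have h3 : px (fun q => 2 * (φ q * (θ q * c q))) p
          = px (fun _ : ℝ × ℝ => (2:ℝ)) p * (φ p * (θ p * c p))
            + 2 * px (fun q => φ q * (θ q * c q)) p :=
        px_mul (differentiableAt_const 2) (hptc p)
      rw [h2, h3, px_const, px_mul3 (hφd p) (hθd p) (hcd p)]
      ring
    have t2 : py β p = py φ p * (b p * θ p) + φ p * (py b p * θ p + b p * py θ p) := by
      rw [hβf, py_mul3 (hφd p) (hbd p) (hθd p)]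
    linear_combination t3 + t1 + E3 p + t2
  have hpyu : py u = fun q => φ q * (a q * px θ q) + φ q * (c q * py θ q)
      - θ q * (a q * px φ q) - θ q * (c q * py φ q) + θ q * (w q * φ q) := by
    funext p
    have t3 : py u p = py δ p - (py φ p * (θ p * c p)
        + φ p * (py θ p * c p + θ p * py c p)) := by
      rw [hu_def]
      rw [py_sub (hδd p) (hptc p), py_mul3 (hφd p) (hθd p) (hcd p)]
    have t2 : px α p = px φ p * (a p * θ p) + φ p * (px a p * θ p + a p * px θ p) := by
      rw [hαf, px_mul3 (hφd p) (had p) (hθd p)]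
    linear_combination t3 - E2 p - t2
  -- Step 4 : u is C², hence mixed partials commute
  have hMc : ContDiff ℝ 1 (fun q => φ q * (a q * px θ q) + φ q * (c q * py θ q)
      - θ q * (a q * px φ q) - θ q * (c q * py φ q) + θ q * (w q * φ q)) := by
    have hφ1 : ContDiff ℝ 1 φ := hφ.of_le one_le_two
    have hθ1 : ContDiff ℝ 1 θ := hθ.of_le one_le_two
    exact ((((hφ1.mul (ha.mul (contDiff_px hθ))).add
      (hφ1.mul (hc.mul (contDiff_py hθ)))).sub
      (hθ1.mul (ha.mul (contDiff_px hφ)))).sub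
      (hθ1.mul (hc.mul (contDiff_py hφ)))).add (hθ1.mul (hw.mul hφ1))
  have hNc : ContDiff ℝ 1 (fun q => -(φ q * (b q * py θ q) + φ q * (c q * px θ q)
      - θ q * (b q * py φ q) - θ q * (c q * px φ q) + θ q * (z q * φ q))) := by
    have hφ1 : ContDiff ℝ 1 φ := hφ.of_le one_le_two
    have hθ1 : ContDiff ℝ 1 θ := hθ.of_le one_le_two
    exact (((((hφ1.mul (hb.mul (contDiff_py hθ))).add
      (hφ1.mul (hc.mul (contDiff_px hθ)))).sub
      (hθ1.mul (hb.mul (contDiff_py hφ)))).sub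
      (hθ1.mul (hc.mul (contDiff_px hφ)))).add (hθ1.mul (hz.mul hφ1))).neg
  have hu2 : ContDiff ℝ 2 u := contDiff_two_of_partials hu1 hNc hMc hpxu hpyu
  -- Step 5 : conclude
  refine ⟨hLθ, fun p => ?_⟩
  have hmix : px (py u) p = py (px u) p := mixed_symm hu2 p
  have hkey := key_identity a b c w z f θ φ ha hb hc hw hz hθ hφ p
  rw [hpyu] at hmix
  rw [hpxu] at hmix
  rw [py_neg] at hmix
  have hzero : px (fun q => φ q * (a q * px θ q) + φ q * (c q * py θ q)
      - θ q * (a q * px φ q) - θ q * (c q * py φ q) + θ q * (w q * φ q)) p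
      + py (fun q => φ q * (b q * py θ q) + φ q * (c q * px θ q)
      - θ q * (b q * py φ q) - θ q * (c q * px φ q) + θ q * (z q * φ q)) p = 0 := by
    linarith [hmix]
  rw [hzero, hLθ p] at hkey
  have : θ p * Ladj a b c w z f φ p = 0 := by linarith [hkey]
  exact (mul_eq_zero.mp this).resolve_left (hθ0 p)
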